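/- Let α > β > γ > 0 be reals and let σ₁, σ₃ > 0 satisfy α(β−γ)σ₁² + γ(α−β)σ₃² = β(α−γ). Let A : ℝ³ → ℝ³ be the linear map A(x,y,z) = (σ₁x, y, σ₃z). Then A is isometric on each plane of the two families containing the circular cross sections of the ellipsoid E: for every sign ε ∈ {1,−1} and all points p = (p₁,p₂,p₃), q = (q₁,q₂,q₃) ∈ ℝ³ with √(1/β − 1/α)·(p₁ − q₁) + ε·√(1/γ − 1/β)·(p₃ − q₃) = 0 (i.e. p and q lie in one common plane Π_ε(μ)), one has ‖A p − A q‖ = ‖p − q‖. -/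

import Mathlib

open Real

noncomputable def pt (x y z : ℝ) : EuclideanSpace ℝ (Fin 3) :=
  (WithLp.equiv 2 (Fin 3 → ℝ)).symm ![x, y, z]

theorem affine_map_isometric_on_circular_planes
    (α β γ : ℝ) (hαβ : β < α) (hβγ : γ < β) (hγ : 0 < γ)
    (σ₁ σ₃ : ℝ) (hσ₁ : 0 < σ₁) (hσ₃ : 0 < σ₃)
    (hconstr : α * (β - γ) * σ₁ ^ 2 + γ * (α - β) * σ₃ ^ 2 = β * (α - γ))
    (ε : ℝ) (hε : ε = 1 ∨ ε = -1)
    (p q : EuclideanSpace ℝ (Fin 3))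
    (hpq : Real.sqrt (1 / β - 1 / α) * (p 0 - q 0)
        + ε * Real.sqrt (1 / γ - 1 / β) * (p 2 - q 2) = 0) :
    ‖pt (σ₁ * p 0) (p 1) (σ₃ * p 2) - pt (σ₁ * q 0) (q 1) (σ₃ * q 2)‖
      = ‖p - q‖ := by
  have hβ : 0 < β := hγ.trans hβγ
  have hα : 0 < α := hβ.trans hαβ
  have h1 : (0:ℝ) ≤ 1 / β - 1 / α := by
    rw [sub_nonneg]; exact one_div_le_one_div_of_le hβ hαβ.le
  have h2 : (0:ℝ) ≤ 1 / γ - 1 / β := by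
    rw [sub_nonneg]; exact one_div_le_one_div_of_le hγ hβγ.le
  set Δx := p 0 - q 0 with hΔx
  set Δz := p 2 - q 2 with hΔz
  have hε2 : ε ^ 2 = 1 := by rcases hε with h | h <;> rw [h] <;> ring
  have hsq : (1 / β - 1 / α) * Δx ^ 2 = (1 / γ - 1 / β) * Δz ^ 2 := by
    have h3 : Real.sqrt (1 / β - 1 / α) ^ 2 = 1 / β - 1 / α := Real.sq_sqrt h1
    have h4 : Real.sqrt (1 / γ - 1 / β) ^ 2 = 1 / γ - 1 / β := Real.sq_sqrt h2
    have heq : Real.sqrt (1 / β - 1 / α) * Δx = - (ε * Real.sqrt (1 / γ - 1 / β) * Δz) := by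
      linarith
    have h5 : (1 / β - 1 / α) * Δx ^ 2 = ε ^ 2 * ((1 / γ - 1 / β) * Δz ^ 2) := by
      calc (1 / β - 1 / α) * Δx ^ 2 = (Real.sqrt (1 / β - 1 / α) * Δx) ^ 2 := by
            rw [mul_pow, h3]
        _ = (ε * Real.sqrt (1 / γ - 1 / β) * Δz) ^ 2 := by rw [heq]; ring
        _ = ε ^ 2 * ((1 / γ - 1 / β) * Δz ^ 2) := by rw [mul_pow, mul_pow, h4]; ring
    rw [hε2, one_mul] at h5
    exact h5
  have hkey : γ * (α - β) * Δx ^ 2 = α * (β - γ) * Δz ^ 2 := by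
    have h := hsq
    field_simp at h
    have h' : β * (γ * (α - β) * Δx ^ 2) = β * (α * (β - γ) * Δz ^ 2) := by
      linear_combination β * h
    exact mul_left_cancel₀ hβ.ne' h'
  have hmain : σ₁ ^ 2 * Δx ^ 2 + σ₃ ^ 2 * Δz ^ 2 = Δx ^ 2 + Δz ^ 2 := by
    have hpos : 0 < α * (β - γ) := by nlinarith
    have : α * (β - γ) * ((σ₁ ^ 2 - 1) * Δx ^ 2 - (1 - σ₃ ^ 2) * Δz ^ 2) = 0 := by
      linear_combination Δx ^ 2 * hconstr - (σ₃ ^ 2 - 1) * hkey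
    have h0 : (σ₁ ^ 2 - 1) * Δx ^ 2 - (1 - σ₃ ^ 2) * Δz ^ 2 = 0 := by
      rcases mul_eq_zero.mp this with h | h
      · exact absurd h (ne_of_gt hpos)
      · exact h
    linarith [h0]
  rw [hΔx, hΔz] at hmain
  rw [EuclideanSpace.norm_eq, EuclideanSpace.norm_eq]
  congr 1
  rw [Fin.sum_univ_three, Fin.sum_univ_three]
  simp only [pt, PiLp.sub_apply, WithLp.equiv_symm_apply, PiLp.toLp_apply, WithLp.ofLp_toLp, Matrix.cons_val_zero,
    Matrix.cons_val_one, Matrix.head_cons, Matrix.cons_val_two, Matrix.tail_cons,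
    Real.norm_eq_abs, sq_abs]
  linear_combination hmain
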